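/- Let 1 ≤ i, j ≤ n with i ≠ j. With respect to the lexicographic monomial order with x_n > x_{n-1} > ... > x_1, the leading monomial of h_i(x_1,...,x_{n-i+1}) is x_{n-i+1}^i, and the leading monomials x_{n-j+1}^j · x_{n-i+1}^{i-1} · x_{n-i} and x_{n-i+1}^i · x_{n-j+1}^{j-1} · x_{n-j} are distinct. -/

import Mathlib

open MvPolynomial Finset

/-- Elementary symmetric polynomial of degree `k` in the first `m` variables `x_1,…,x_m`
(0-indexed: the variables `X i` with `(i : ℕ) < m`), viewed in the polynomial ring in
`n` variables. It is `1` for `k = 0` and `0` for `k > m`. -/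
noncomputable def esymb (R : Type) [CommRing R] (n m k : ℕ) : MvPolynomial (Fin n) R :=
  ∑ S ∈ (Finset.univ.filter (fun i : Fin n => (i : ℕ) < m)).powersetCard k, ∏ i ∈ S, X i

/-- Complete homogeneous symmetric polynomial of degree `k` in the first `m` variables
`x_1,…,x_m` (0-indexed: the variables `X i` with `(i : ℕ) < m`), viewed in the polynomial
ring in `n` variables. It is `1` for `k = 0` and, for `k > 0`, it is `0` when `m = 0`. -/
noncomputable def hsymb (R : Type) [CommRing R] (n m k : ℕ) : MvPolynomial (Fin n) R :=
  ∑ μ ∈ (Finset.univ.filter (fun i : Fin n => (i : ℕ) < m)).sym k,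
    ((μ : Multiset (Fin n)).map X).prod

/-- `d` is the leading monomial (exponent vector) of `p` with respect to the lexicographic
monomial order in which `x_n > x_{n-1} > ⋯ > x_1` (0-indexed: `X ⟨n-1⟩ > ⋯ > X ⟨0⟩`).
We compare exponent vectors in `Lex (Fin n →₀ ℕ)` after reversing the variables via
`Fin.revPerm`, since `Lex` makes the *smallest* index most significant. -/
def IsLexLeadMonom {n : ℕ} {R : Type} [CommRing R] (p : MvPolynomial (Fin n) R)
    (d : Fin n →₀ ℕ) : Prop :=
  d ∈ p.support ∧ ∀ d' ∈ p.support,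
    toLex (Finsupp.equivMapDomain Fin.revPerm d') ≤ toLex (Finsupp.equivMapDomain Fin.revPerm d)

lemma toFinsupp_cons' {n : ℕ} (a : Fin n) (s : Multiset (Fin n)) :
    Multiset.toFinsupp (a ::ₘ s) = Finsupp.single a 1 + Multiset.toFinsupp s := by
  rw [show (a ::ₘ s) = {a} + s from (Multiset.singleton_add a s).symm,
    Multiset.toFinsupp_add, Multiset.toFinsupp_singleton]

lemma prodX_eq {n : ℕ} {R : Type} [CommRing R] (μ : Multiset (Fin n)) :
    (μ.map X).prod = monomial (μ.toFinsupp) (1 : R) := by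
  induction μ using Multiset.induction_on with
  | empty => simp [monomial_zero']
  | cons a s ih =>
      rw [Multiset.map_cons, Multiset.prod_cons, ih, X, monomial_mul, one_mul, toFinsupp_cons']

lemma toFinsupp_replicate' {n : ℕ} (a : Fin n) (k : ℕ) :
    Multiset.toFinsupp (Multiset.replicate k a) = Finsupp.single a k := by
  rw [Multiset.toFinsupp_eq_iff, Finsupp.toMultiset_single]
  simp [Multiset.nsmul_singleton]

lemma lead_part (R : Type) [CommRing R] [Nontrivial R] (n i : ℕ)
    (hi : 1 ≤ i) (hin : i ≤ n) :
    IsLexLeadMonom (hsymb R n (n + 1 - i) i) (Finsupp.single (⟨n - i, by omega⟩ : Fin n) i) := by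
  classical
  set a : Fin n := ⟨n - i, by omega⟩ with ha
  set s : Finset (Fin n) := Finset.univ.filter (fun x : Fin n => (x : ℕ) < n + 1 - i) with hs
  have hmem_s : a ∈ s := by simp [hs, ha]; omega
  have hrw : hsymb R n (n + 1 - i) i
      = ∑ μ ∈ s.sym i, monomial (Multiset.toFinsupp (μ : Multiset (Fin n))) (1 : R) :=
    Finset.sum_congr rfl fun μ _ => prodX_eq _
  have hμ0 : (Sym.replicate i a : Sym (Fin n) i) ∈ s.sym i := by
    rw [Finset.mem_sym_iff]
    intro x hx
    rw [Sym.mem_replicate] at hx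
    rw [hx.2]; exact hmem_s
  constructor
  · rw [mem_support_iff, hrw, coeff_sum]
    rw [Finset.sum_eq_single_of_mem _ hμ0]
    · rw [Sym.coe_replicate, toFinsupp_replicate', coeff_monomial, if_pos rfl]
      exact one_ne_zero
    · intro μ hμ hne
      rw [coeff_monomial, if_neg]
      intro heq
      apply hne
      apply Sym.coe_injective
      rw [Multiset.toFinsupp_eq_iff] at heq
      rw [heq, Sym.coe_replicate, Finsupp.toMultiset_single, Multiset.nsmul_singleton]
  · intro d' hd'
    rw [hrw] at hd'
    have := MvPolynomial.support_sum hd'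
    rw [Finset.mem_biUnion] at this
    obtain ⟨μ, hμ, hd'μ⟩ := this
    rw [support_monomial, if_neg one_ne_zero, Finset.mem_singleton] at hd'μ
    subst hd'μ
    set d' : Fin n →₀ ℕ := Multiset.toFinsupp (μ : Multiset (Fin n)) with hd'def
    have hsum' : ∑ x ∈ d'.support, d' x = i := (Multiset.toFinsupp_sum_eq _).trans μ.2
    have hsupp : ∀ x : Fin n, d' x ≠ 0 → (x : ℕ) ≤ n - i := by
      intro x hx
      have hx' : Multiset.count x (μ : Multiset (Fin n)) ≠ 0 := by
        rwa [hd'def, Multiset.toFinsupp_apply] at hx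
      have hxμ : x ∈ (μ : Multiset (Fin n)) := Multiset.count_pos.mp (Nat.pos_of_ne_zero hx')
      have := Finset.mem_sym_iff.mp hμ x hxμ
      rw [hs, Finset.mem_filter] at this
      omega
    set e : Fin n →₀ ℕ := Finsupp.equivMapDomain Fin.revPerm d' with he
    set r : Fin n := Fin.revPerm a with hr
    have hrv : (r : ℕ) = i - 1 := by
      simp only [hr, Fin.revPerm, Equiv.coe_fn_mk, Fin.val_rev]
      show n - (n - i + 1) = i - 1
      omega
    have heapp : ∀ k : Fin n, e k = d' (Fin.rev k) := by
      intro k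
      rw [he, Finsupp.equivMapDomain_apply, Fin.revPerm_symm]
      rfl
    have hra : Fin.rev r = a := by
      apply Fin.ext
      rw [Fin.val_rev, hrv]
      show n - (i - 1 + 1) = n - i
      omega
    have hesupp : ∀ k : Fin n, e k ≠ 0 → r ≤ k := by
      intro k hk
      rw [heapp] at hk
      have := hsupp _ hk
      rw [Fin.val_rev] at this
      rw [Fin.le_def, hrv]
      have := k.2
      omega
    have her : e r = d' a := by rw [heapp, hra]
    have hda_le : d' a ≤ i := by
      by_cases hmem : a ∈ d'.support
      · calc d' a ≤ ∑ x ∈ d'.support, d' x :=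
              Finset.single_le_sum (fun x _ => Nat.zero_le _) hmem
          _ = i := hsum'
      · rw [Finsupp.notMem_support_iff.mp hmem]; omega
    rw [show Finsupp.equivMapDomain Fin.revPerm (Finsupp.single a i)
        = Finsupp.single r i from Finsupp.equivMapDomain_single ..]
    rcases eq_or_lt_of_le hda_le with hcase | hcase
    · have hsingle : e = Finsupp.single r i := by
        ext k
        by_cases hk : k = r
        · rw [hk, her, hcase, Finsupp.single_eq_same]
        · rw [Finsupp.single_eq_of_ne' (Ne.symm hk)]
          by_contra hk0
          have hx0 : d' (Fin.rev k) ≠ 0 := by rw [← heapp]; exact hk0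
          have hxa : a ≠ Fin.rev k := by
            intro hxa; apply hk; rw [← Fin.rev_rev k, ← hxa]; rfl
          have hmem1 : a ∈ d'.support := by rw [Finsupp.mem_support_iff, hcase]; omega
          have hmem2 : Fin.rev k ∈ d'.support := Finsupp.mem_support_iff.mpr hx0
          have hsub : ({a, Fin.rev k} : Finset (Fin n)) ⊆ d'.support := by
            intro y hy
            rcases Finset.mem_insert.mp hy with h | h
            · rw [h]; exact hmem1
            · rw [Finset.mem_singleton.mp h]; exact hmem2
          have hle : d' a + d' (Fin.rev k) ≤ i := by
            calc d' a + d' (Fin.rev k) = ∑ y ∈ ({a, Fin.rev k} : Finset (Fin n)), d' y :=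
                  (Finset.sum_pair hxa).symm
              _ ≤ ∑ y ∈ d'.support, d' y :=
                  Finset.sum_le_sum_of_subset hsub
              _ = i := hsum'
          omega
      rw [hsingle]
    · apply le_of_lt
      have hlex : Finsupp.Lex (· < ·) (· < ·) e (Finsupp.single r i) := by
        rw [Finsupp.lex_def]
        refine ⟨r, ?_, ?_⟩
        · intro d hd
          have h1 : e d = 0 := by
            by_contra h
            exact absurd (hesupp d h) (not_le.mpr hd)
          have h2 : (Finsupp.single r i) d = 0 :=
            Finsupp.single_eq_of_ne' (ne_of_lt hd).symm
          rw [h1, h2]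
        · rw [her, Finsupp.single_eq_same]; exact hcase
      exact hlex


/-- In lex order with x_n > ⋯ > x_1, the leading monomial of h_i(x_1,…,x_{n-i+1}) is
x_{n-i+1}^i, and the monomials x_{n-j+1}^j x_{n-i+1}^{i-1} x_{n-i} and
x_{n-i+1}^i x_{n-j+1}^{j-1} x_{n-j} are distinct (for i ≠ j). -/
theorem stmt14 (R : Type) [CommRing R] [Nontrivial R] (n i j : ℕ)
    (hi : 1 ≤ i) (hin : i ≤ n) (hj : 1 ≤ j) (hjn : j ≤ n) (hij : i ≠ j) :
    IsLexLeadMonom (hsymb R n (n + 1 - i) i) (Finsupp.single (⟨n - i, by omega⟩ : Fin n) i) ∧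
    (Finsupp.single (⟨n - j, by omega⟩ : Fin n) j +
        Finsupp.single (⟨n - i, by omega⟩ : Fin n) (i - 1) +
        Finsupp.single (⟨n - i - 1, by omega⟩ : Fin n) 1 ≠
      Finsupp.single (⟨n - i, by omega⟩ : Fin n) i +
        Finsupp.single (⟨n - j, by omega⟩ : Fin n) (j - 1) +
        Finsupp.single (⟨n - j - 1, by omega⟩ : Fin n) 1) := by
  constructor
  · exact lead_part R n i hi hin
  · intro h
    rcases lt_or_gt_of_ne hij with hlt | hlt
    · have := DFunLike.congr_fun h (⟨n - i, by omega⟩ : Fin n)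
      simp only [Finsupp.add_apply, Finsupp.single_apply, Fin.mk.injEq] at this
      have h1 : ¬ (n - j = n - i) := by omega
      have h2 : ¬ (n - i - 1 = n - i) := by omega
      have h3 : ¬ (n - j - 1 = n - i) := by omega
      split_ifs at this <;> omega
    · have := DFunLike.congr_fun h (⟨n - j, by omega⟩ : Fin n)
      simp only [Finsupp.add_apply, Finsupp.single_apply, Fin.mk.injEq] at this
      have h1 : ¬ (n - i = n - j) := by omega
      have h2 : ¬ (n - i - 1 = n - j) := by omega
      have h3 : ¬ (n - j - 1 = n - j) := by omega
      split_ifs at this <;> omega
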